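/- arXiv:1210.6506 — 10 statements merged into one kernel-verified Lean document; each statement's English description precedes it below -/
import Mathlib

section
/- Let h : a → b be an isomorphism in a metric-enriched category K⁰ with subcategory K (same objects), and define the norm μ(f) = inf { ρ(j ∘ f, i) : i, j ∈ K compatible arrows }. Then μ(h) = μ(h⁻¹). -/
open CategoryTheory

universe u v

/-- A category enriched over metric spaces: each hom-set carries an (extended) metric `ρ`
such that composition is non-expansive on both sides. -/
structure MetricEnrichment (C : Type u) [Category.{v} C] where
  ρ : ∀ {a b : C}, (a ⟶ b) → (a ⟶ b) → ENNReal
  ρ_self : ∀ {a b : C} (f : a ⟶ b), ρ f f = 0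
  eq_of_ρ_eq_zero : ∀ {a b : C} {f g : a ⟶ b}, ρ f g = 0 → f = g
  ρ_comm : ∀ {a b : C} (f g : a ⟶ b), ρ f g = ρ g f
  ρ_triangle : ∀ {a b : C} (f g h : a ⟶ b), ρ f h ≤ ρ f g + ρ g h
  precomp_nonexpansive : ∀ {a b c : C} (g : a ⟶ b) (f₀ f₁ : b ⟶ c),
    ρ (g ≫ f₀) (g ≫ f₁) ≤ ρ f₀ f₁
  postcomp_nonexpansive : ∀ {a b c : C} (f₀ f₁ : a ⟶ b) (h : b ⟶ c),
    ρ (f₀ ≫ h) (f₁ ≫ h) ≤ ρ f₀ f₁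

/-- A (wide) subcategory with the same objects, given by a class of arrows containing
identities and closed under composition. -/
structure WideSubcat (C : Type u) [Category.{v} C] where
  mem : ∀ {a b : C}, (a ⟶ b) → Prop
  id_mem : ∀ a : C, mem (𝟙 a)
  comp_mem : ∀ {a b c : C} {f : a ⟶ b} {g : b ⟶ c}, mem f → mem g → mem (f ≫ g)

/-- The norm `μ(f) = inf { ρ(j ∘ f, i) : i, j ∈ K compatible }` of an arrow of the big
category, induced by the pair (K, K⁰). -/
noncomputable def normOf {C : Type u} [Category.{v} C] (M : MetricEnrichment C)
    (K : WideSubcat C) {a b : C} (f : a ⟶ b) : ENNReal :=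
  ⨅ (c : C) (i : a ⟶ c) (j : b ⟶ c) (_ : K.mem i) (_ : K.mem j), M.ρ (f ≫ j) i

/-- If `h : a ≅ b` is an isomorphism in a metric-enriched category with a wide
subcategory `K`, then `μ(h) = μ(h⁻¹)`. -/
theorem stmt0 {C : Type u} [Category.{v} C] (M : MetricEnrichment C) (K : WideSubcat C)
    {a b : C} (h : a ≅ b) : normOf M K h.hom = normOf M K h.inv := by
  have key : ∀ (c : C) (i : a ⟶ c) (j : b ⟶ c),
      M.ρ (h.inv ≫ i) j = M.ρ (h.hom ≫ j) i := by
    intro c i j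
    apply le_antisymm
    · calc M.ρ (h.inv ≫ i) j
          = M.ρ (h.inv ≫ i) (h.inv ≫ (h.hom ≫ j)) := by simp
      _ ≤ M.ρ i (h.hom ≫ j) := M.precomp_nonexpansive _ _ _
      _ = M.ρ (h.hom ≫ j) i := M.ρ_comm _ _
    · calc M.ρ (h.hom ≫ j) i
          = M.ρ (h.hom ≫ j) (h.hom ≫ (h.inv ≫ i)) := by simp
      _ ≤ M.ρ j (h.inv ≫ i) := M.precomp_nonexpansive _ _ _
      _ = M.ρ (h.inv ≫ i) j := M.ρ_comm _ _
  apply le_antisymm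
  · refine le_iInf fun c => le_iInf fun i => le_iInf fun j => le_iInf fun hi =>
      le_iInf fun hj => ?_
    have : normOf M K h.hom ≤ M.ρ (h.hom ≫ i) j := by
      refine le_trans ?_ (le_refl _)
      exact iInf_le_of_le c (iInf_le_of_le j (iInf_le_of_le i
        (iInf_le_of_le hj (iInf_le _ hi))))
    calc normOf M K h.hom ≤ M.ρ (h.hom ≫ i) j := this
      _ = M.ρ (h.inv ≫ j) i := (key c j i).symm
  · refine le_iInf fun c => le_iInf fun i => le_iInf fun j => le_iInf fun hi =>
      le_iInf fun hj => ?_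
    calc normOf M K h.inv
        ≤ M.ρ (h.inv ≫ i) j := iInf_le_of_le c (iInf_le_of_le j (iInf_le_of_le i
          (iInf_le_of_le hj (iInf_le _ hi))))
      _ = M.ρ (h.hom ≫ j) i := key c i j
end

section
/- Let X, Y be normed spaces, ε ≥ 0, and f : X → Y a linear map satisfying (1−ε)‖x‖ ≤ ‖f(x)‖ ≤ ‖x‖ for all x ∈ X. Define a norm on Z = X ⊕ Y by ‖(x,y)‖ = inf{ ‖u‖_X + ‖v‖_Y + ε‖w‖_X : (x,y) = (u,v) + (w, −f(w)), u,w ∈ X, v ∈ Y }. Then the canonical injections i : X → Z, x ↦ (x,0) and j : Y → Z, y ↦ (0,y) are isometric embeddings. -/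
/-- Let `f : X → Y` be linear with `(1−ε)‖x‖ ≤ ‖f x‖ ≤ ‖x‖`, and equip `Z = X ⊕ Y` with the
norm `N(x,y) = inf{‖u‖ + ‖v‖ + ε‖w‖ : (x,y) = (u,v) + (w, −f w)}`.  Then the canonical
injections `i : x ↦ (x,0)` and `j : y ↦ (0,y)` are isometric. -/
theorem stmt1 {X Y : Type*} [NormedAddCommGroup X] [NormedSpace ℝ X]
    [NormedAddCommGroup Y] [NormedSpace ℝ Y]
    (ε : ℝ) (hε : 0 ≤ ε) (f : X →ₗ[ℝ] Y)
    (hf : ∀ x : X, (1 - ε) * ‖x‖ ≤ ‖f x‖ ∧ ‖f x‖ ≤ ‖x‖)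
    (N : X × Y → ℝ)
    (hN : ∀ p : X × Y, N p = sInf {r : ℝ | ∃ (u w : X) (v : Y),
      p.1 = u + w ∧ p.2 = v - f w ∧ r = ‖u‖ + ‖v‖ + ε * ‖w‖}) :
    (∀ x : X, N (x, 0) = ‖x‖) ∧ (∀ y : Y, N (0, y) = ‖y‖) := by
  constructor
  · intro x
    rw [hN]
    have hmem : ‖x‖ ∈ {r : ℝ | ∃ (u w : X) (v : Y),
        (x, (0:Y)).1 = u + w ∧ (x, (0:Y)).2 = v - f w ∧ r = ‖u‖ + ‖v‖ + ε * ‖w‖} := by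
      refine ⟨x, 0, 0, by simp, by simp, by simp⟩
    have hlb : ∀ r ∈ {r : ℝ | ∃ (u w : X) (v : Y),
        (x, (0:Y)).1 = u + w ∧ (x, (0:Y)).2 = v - f w ∧ r = ‖u‖ + ‖v‖ + ε * ‖w‖}, ‖x‖ ≤ r := by
      rintro r ⟨u, w, v, h1, h2, h3⟩
      have hv : v = f w := by
        have := h2.symm
        simpa [sub_eq_zero] using this
      subst hv
      have h4 : ‖x‖ ≤ ‖u‖ + ‖w‖ := by
        rw [show x = u + w from h1]; exact norm_add_le _ _
      have h5 := (hf w).1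
      have hwn : 0 ≤ ‖w‖ := norm_nonneg w
      nlinarith
    exact le_antisymm (csInf_le ⟨‖x‖, hlb⟩ hmem) (le_csInf ⟨‖x‖, hmem⟩ hlb)
  · intro y
    rw [hN]
    have hmem : ‖y‖ ∈ {r : ℝ | ∃ (u w : X) (v : Y),
        ((0:X), y).1 = u + w ∧ ((0:X), y).2 = v - f w ∧ r = ‖u‖ + ‖v‖ + ε * ‖w‖} := by
      refine ⟨0, 0, y, by simp, by simp, by simp⟩
    have hlb : ∀ r ∈ {r : ℝ | ∃ (u w : X) (v : Y),
        ((0:X), y).1 = u + w ∧ ((0:X), y).2 = v - f w ∧ r = ‖u‖ + ‖v‖ + ε * ‖w‖}, ‖y‖ ≤ r := by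
      rintro r ⟨u, w, v, h1, h2, h3⟩
      have hu : u = -w := eq_neg_of_add_eq_zero_left h1.symm
      have hnu : ‖u‖ = ‖w‖ := by rw [hu, norm_neg]
      have hv : ‖y‖ ≤ ‖v‖ + ‖f w‖ := by
        calc ‖y‖ = ‖v - f w‖ := by rw [← h2]
        _ ≤ ‖v‖ + ‖f w‖ := norm_sub_le _ _
      have h5 := (hf w).2
      nlinarith [mul_nonneg hε (norm_nonneg w)]
    exact le_antisymm (csInf_le ⟨‖y‖, hlb⟩ hmem) (le_csInf ⟨‖y‖, hmem⟩ hlb)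
end

section
/- In a normed category (K, K⁰) with the almost amalgamation property: for every ε, δ > 0 and all K⁰-arrows f : c → a and g : c → b with μ(f) < ε and μ(g) < δ, there exist K-arrows f' : a → w and g' : b → w such that ρ(f'∘f, g'∘g) < ε + δ. -/
open CategoryTheory

universe u v

/-- The almost amalgamation property of the subcategory `K`. -/
def AlmostAmalg {C : Type u} [Category.{v} C] (M : MetricEnrichment C)
    (K : WideSubcat C) : Prop :=
  ∀ {c a b : C} (f : c ⟶ a) (g : c ⟶ b), K.mem f → K.mem g →
    ∀ ε : ENNReal, 0 < ε →
      ∃ (w : C) (f' : a ⟶ w) (g' : b ⟶ w), K.mem f' ∧ K.mem g' ∧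
        M.ρ (f ≫ f') (g ≫ g') < ε

/-- In a normed category with the almost amalgamation property, arrows of small norm can be
almost amalgamated: if `μ(f) < ε` and `μ(g) < δ` then there are `K`-arrows `f'`, `g'` with
`ρ(f' ∘ f, g' ∘ g) < ε + δ`. -/
theorem stmt4 {C : Type u} [Category.{v} C] (M : MetricEnrichment C) (K : WideSubcat C)
    (amalg : AlmostAmalg M K) (ε δ : ENNReal) (hε : 0 < ε) (hδ : 0 < δ)
    {c a b : C} (f : c ⟶ a) (g : c ⟶ b)
    (hf : normOf M K f < ε) (hg : normOf M K g < δ) :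
    ∃ (w : C) (f' : a ⟶ w) (g' : b ⟶ w), K.mem f' ∧ K.mem g' ∧
      M.ρ (f ≫ f') (g ≫ g') < ε + δ := by
  simp only [normOf, iInf_lt_iff] at hf hg
  obtain ⟨d, i, j, hi, hj, hρ1⟩ := hf
  obtain ⟨e, i', j', hi', hj', hρ2⟩ := hg
  -- choose η > 0 with ρ1 + η < ε
  obtain ⟨η, hη0, hη⟩ : ∃ η : ENNReal, 0 < η ∧ M.ρ (f ≫ j) i + η < ε := by
    rcases eq_or_ne ε ⊤ with rfl | hεt
    · exact ⟨1, zero_lt_one, ENNReal.add_lt_top.mpr ⟨hρ1, ENNReal.one_lt_top⟩⟩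
    · refine ⟨(ε - M.ρ (f ≫ j) i) / 2, ENNReal.div_pos (tsub_pos_of_lt hρ1).ne'
        ENNReal.ofNat_ne_top, ?_⟩
      calc M.ρ (f ≫ j) i + (ε - M.ρ (f ≫ j) i) / 2
          < M.ρ (f ≫ j) i + (ε - M.ρ (f ≫ j) i) := by
            refine ENNReal.add_lt_add_left (hρ1.trans_le le_top).ne ?_
            exact ENNReal.half_lt_self (tsub_pos_of_lt hρ1).ne'
              (by simp [ENNReal.sub_ne_top hεt])
        _ = ε := add_tsub_cancel_of_le hρ1.le
  obtain ⟨w, p, q, hp, hq, hpq⟩ := amalg i i' hi hi' η hη0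
  refine ⟨w, j ≫ p, j' ≫ q, K.comp_mem hj hp, K.comp_mem hj' hq, ?_⟩
  have h1 : M.ρ (f ≫ (j ≫ p)) (i ≫ p) ≤ M.ρ (f ≫ j) i := by
    simpa using M.postcomp_nonexpansive (f ≫ j) i p
  have h2 : M.ρ (i' ≫ q) (g ≫ (j' ≫ q)) ≤ M.ρ i' (g ≫ j') := by
    simpa using M.postcomp_nonexpansive i' (g ≫ j') q
  have h2' : M.ρ i' (g ≫ j') = M.ρ (g ≫ j') i' := M.ρ_comm _ _
  calc M.ρ (f ≫ (j ≫ p)) (g ≫ (j' ≫ q))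
      ≤ M.ρ (f ≫ (j ≫ p)) (i ≫ p) + M.ρ (i ≫ p) (g ≫ (j' ≫ q)) :=
        M.ρ_triangle _ _ _
    _ ≤ M.ρ (f ≫ (j ≫ p)) (i ≫ p) +
        (M.ρ (i ≫ p) (i' ≫ q) + M.ρ (i' ≫ q) (g ≫ (j' ≫ q))) := by
        gcongr; exact M.ρ_triangle _ _ _
    _ ≤ M.ρ (f ≫ j) i + (η + M.ρ (g ≫ j') i') := by
        gcongr <;> first
          | exact h1
          | exact hpq.le
          | exact h2.trans_eq h2'
    _ = (M.ρ (f ≫ j) i + η) + M.ρ (g ≫ j') i' := by ring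
    _ < ε + δ := ENNReal.add_lt_add hη hρ2
end

section
/- In a normed category (K, K⁰) with the almost amalgamation property, for all compatible K⁰-arrows f, g: (N₁) μ(f∘g) ≤ μ(f) + μ(g), and (N₂) μ(g) ≤ μ(f) + μ(f∘g). -/
open CategoryTheory

universe u v

lemma normOf_le' {C : Type u} [Category.{v} C] (M : MetricEnrichment C)
    (K : WideSubcat C) {a b : C} (f : a ⟶ b) {d : C} (i : a ⟶ d) (j : b ⟶ d)
    (hi : K.mem i) (hj : K.mem j) : normOf M K f ≤ M.ρ (f ≫ j) i :=
  iInf_le_of_le d (iInf_le_of_le i (iInf_le_of_le j (iInf_le_of_le hi (iInf_le _ hj))))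

lemma exists_witness' {C : Type u} [Category.{v} C] (M : MetricEnrichment C)
    (K : WideSubcat C) {a b : C} (f : a ⟶ b) {t : ENNReal} (h : normOf M K f < t) :
    ∃ (d : C) (i : a ⟶ d) (j : b ⟶ d), K.mem i ∧ K.mem j ∧ M.ρ (f ≫ j) i < t := by
  simp only [normOf, iInf_lt_iff] at h
  obtain ⟨d, i, j, hi, hj, h⟩ := h
  exact ⟨d, i, j, hi, hj, h⟩

/-- In a normed category with the almost amalgamation property the norm satisfies
`(N₁) μ(f∘g) ≤ μ(f) + μ(g)` and `(N₂) μ(g) ≤ μ(f) + μ(f∘g)` for compatible arrows. -/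
theorem stmt6 {C : Type u} [Category.{v} C] (M : MetricEnrichment C) (K : WideSubcat C)
    (amalg : AlmostAmalg M K) {a b c : C} (g : a ⟶ b) (f : b ⟶ c) :
    normOf M K (g ≫ f) ≤ normOf M K f + normOf M K g ∧
    normOf M K g ≤ normOf M K f + normOf M K (g ≫ f) := by
  constructor
  · apply ENNReal.le_of_forall_pos_le_add
    intro ε hε htop
    set δ : ENNReal := (ε : ENNReal) / 3 with hδdef
    have hδ : 0 < δ := ENNReal.div_pos (by exact_mod_cast hε.ne') (by norm_num)
    have hf : normOf M K f < ⊤ := lt_of_le_of_lt le_self_add htop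
    have hg : normOf M K g < ⊤ := lt_of_le_of_lt le_add_self htop
    obtain ⟨d, i, j, hi, hj, h1⟩ :=
      exists_witness' M K f (ENNReal.lt_add_right hf.ne hδ.ne')
    obtain ⟨e, i', j', hi', hj', h2⟩ :=
      exists_witness' M K g (ENNReal.lt_add_right hg.ne hδ.ne')
    obtain ⟨w, i'', j'', hi'', hj'', h3⟩ := amalg j' i hj' hi δ hδ
    have hsum : δ + δ + δ ≤ (ε : ENNReal) := by
      have : δ + δ + δ = 3 * ((ε : ENNReal) / 3) := by rw [hδdef]; ring
      rw [this]; exact ENNReal.mul_div_le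
    calc normOf M K (g ≫ f)
        ≤ M.ρ ((g ≫ f) ≫ j ≫ j'') (i' ≫ i'') :=
          normOf_le' M K _ _ _ (K.comp_mem hi' hi'') (K.comp_mem hj hj'')
      _ = M.ρ (g ≫ f ≫ j ≫ j'') (i' ≫ i'') := by rw [Category.assoc]
      _ ≤ M.ρ (g ≫ f ≫ j ≫ j'') (g ≫ i ≫ j'') + M.ρ (g ≫ i ≫ j'') (i' ≫ i'') :=
          M.ρ_triangle _ _ _
      _ ≤ M.ρ (g ≫ f ≫ j ≫ j'') (g ≫ i ≫ j'') +
            (M.ρ (g ≫ i ≫ j'') (g ≫ j' ≫ i'') + M.ρ (g ≫ j' ≫ i'') (i' ≫ i'')) :=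
          add_le_add_right (M.ρ_triangle _ _ _) _
      _ ≤ (normOf M K f + δ) + (δ + (normOf M K g + δ)) := by
          refine add_le_add ?_ (add_le_add ?_ ?_)
          · calc M.ρ (g ≫ f ≫ j ≫ j'') (g ≫ i ≫ j'')
                ≤ M.ρ (f ≫ j ≫ j'') (i ≫ j'') := M.precomp_nonexpansive _ _ _
              _ = M.ρ ((f ≫ j) ≫ j'') (i ≫ j'') := by rw [Category.assoc]
              _ ≤ M.ρ (f ≫ j) i := M.postcomp_nonexpansive _ _ _
              _ ≤ normOf M K f + δ := h1.le
          · calc M.ρ (g ≫ i ≫ j'') (g ≫ j' ≫ i'')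
                ≤ M.ρ (i ≫ j'') (j' ≫ i'') := M.precomp_nonexpansive _ _ _
              _ = M.ρ (j' ≫ i'') (i ≫ j'') := M.ρ_comm _ _
              _ ≤ δ := h3.le
          · calc M.ρ (g ≫ j' ≫ i'') (i' ≫ i'')
                = M.ρ ((g ≫ j') ≫ i'') (i' ≫ i'') := by rw [Category.assoc]
              _ ≤ M.ρ (g ≫ j') i' := M.postcomp_nonexpansive _ _ _
              _ ≤ normOf M K g + δ := h2.le
      _ ≤ normOf M K f + normOf M K g + (ε : ENNReal) := by
          calc (normOf M K f + δ) + (δ + (normOf M K g + δ))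
              = normOf M K f + normOf M K g + (δ + δ + δ) := by ring
            _ ≤ normOf M K f + normOf M K g + (ε : ENNReal) := add_le_add_right hsum _
  · apply ENNReal.le_of_forall_pos_le_add
    intro ε hε htop
    set δ : ENNReal := (ε : ENNReal) / 3 with hδdef
    have hδ : 0 < δ := ENNReal.div_pos (by exact_mod_cast hε.ne') (by norm_num)
    have hf : normOf M K f < ⊤ := lt_of_le_of_lt le_self_add htop
    have hgf : normOf M K (g ≫ f) < ⊤ := lt_of_le_of_lt le_add_self htop
    obtain ⟨d, i, j, hi, hj, h1⟩ :=
      exists_witness' M K f (ENNReal.lt_add_right hf.ne hδ.ne')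
    obtain ⟨e, i', j', hi', hj', h2⟩ :=
      exists_witness' M K (g ≫ f) (ENNReal.lt_add_right hgf.ne hδ.ne')
    obtain ⟨w, j'', j''', hj'', hj''', h3⟩ := amalg j j' hj hj' δ hδ
    have hsum : δ + δ + δ ≤ (ε : ENNReal) := by
      have : δ + δ + δ = 3 * ((ε : ENNReal) / 3) := by rw [hδdef]; ring
      rw [this]; exact ENNReal.mul_div_le
    calc normOf M K g
        ≤ M.ρ (g ≫ i ≫ j'') (i' ≫ j''') :=
          normOf_le' M K _ _ _ (K.comp_mem hi' hj''') (K.comp_mem hi hj'')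
      _ ≤ M.ρ (g ≫ i ≫ j'') (g ≫ f ≫ j ≫ j'') + M.ρ (g ≫ f ≫ j ≫ j'') (i' ≫ j''') :=
          M.ρ_triangle _ _ _
      _ ≤ M.ρ (g ≫ i ≫ j'') (g ≫ f ≫ j ≫ j'') +
            (M.ρ (g ≫ f ≫ j ≫ j'') (g ≫ f ≫ j' ≫ j''') +
              M.ρ (g ≫ f ≫ j' ≫ j''') (i' ≫ j''')) :=
          add_le_add_right (M.ρ_triangle _ _ _) _
      _ ≤ (normOf M K f + δ) + (δ + (normOf M K (g ≫ f) + δ)) := by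
          refine add_le_add ?_ (add_le_add ?_ ?_)
          · calc M.ρ (g ≫ i ≫ j'') (g ≫ f ≫ j ≫ j'')
                ≤ M.ρ (i ≫ j'') (f ≫ j ≫ j'') := M.precomp_nonexpansive _ _ _
              _ = M.ρ (i ≫ j'') ((f ≫ j) ≫ j'') := by rw [Category.assoc]
              _ ≤ M.ρ i (f ≫ j) := M.postcomp_nonexpansive _ _ _
              _ = M.ρ (f ≫ j) i := M.ρ_comm _ _
              _ ≤ normOf M K f + δ := h1.le
          · calc M.ρ (g ≫ f ≫ j ≫ j'') (g ≫ f ≫ j' ≫ j''')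
                = M.ρ ((g ≫ f) ≫ j ≫ j'') ((g ≫ f) ≫ j' ≫ j''') := by
                  rw [Category.assoc, Category.assoc]
              _ ≤ M.ρ (j ≫ j'') (j' ≫ j''') := M.precomp_nonexpansive _ _ _
              _ ≤ δ := h3.le
          · calc M.ρ (g ≫ f ≫ j' ≫ j''') (i' ≫ j''')
                = M.ρ (((g ≫ f) ≫ j') ≫ j''') (i' ≫ j''') := by
                  rw [Category.assoc, Category.assoc]
              _ ≤ M.ρ ((g ≫ f) ≫ j') i' := M.postcomp_nonexpansive _ _ _
              _ ≤ normOf M K (g ≫ f) + δ := h2.le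
      _ ≤ normOf M K f + normOf M K (g ≫ f) + (ε : ENNReal) := by
          calc (normOf M K f + δ) + (δ + (normOf M K (g ≫ f) + δ))
              = normOf M K f + normOf M K (g ≫ f) + (δ + δ + δ) := by ring
            _ ≤ _ := add_le_add_right hsum _
end

section
/- Let i : Z → X and j : Z → Y be linear isometric embeddings of Banach spaces. Set Δ = {(i(z), −j(z)) : z ∈ Z} ⊆ X ⊕ Y and W = (X ⊕ Y)/Δ̄. Then the induced maps i' : X → W and j' : Y → W are linear isometric embeddings satisfying i' ∘ i = j' ∘ j. -/
open Metric ENNReal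

/-- Pushout of isometric embeddings of Banach spaces: given isometric embeddings
`i : Z → X`, `j : Z → Y`, let `Δ = {(i z, −j z) : z ∈ Z}` inside the ℓ¹-sum `X ⊕₁ Y` and
`W = (X ⊕₁ Y)/Δ̄` with the quotient norm.  Then the induced maps `i' : x ↦ [(x,0)]` and
`j' : y ↦ [(0,y)]` are isometric and `i' ∘ i = j' ∘ j`. -/
theorem stmt7 {Z X Y : Type*}
    [NormedAddCommGroup Z] [NormedSpace ℝ Z] [CompleteSpace Z]
    [NormedAddCommGroup X] [NormedSpace ℝ X] [CompleteSpace X]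
    [NormedAddCommGroup Y] [NormedSpace ℝ Y] [CompleteSpace Y]
    (i : Z →ₗᵢ[ℝ] X) (j : Z →ₗᵢ[ℝ] Y)
    (Δ : Submodule ℝ (WithLp 1 (X × Y)))
    (hΔ : Δ = (LinearMap.range
      ((WithLp.linearEquiv 1 ℝ (X × Y)).symm.toLinearMap.comp
        (LinearMap.prod i.toLinearMap (-j.toLinearMap)))).topologicalClosure) :
    (∀ x : X, ‖(Submodule.Quotient.mk ((WithLp.equiv 1 (X × Y)).symm (x, 0)) :
        WithLp 1 (X × Y) ⧸ Δ)‖ = ‖x‖) ∧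
    (∀ y : Y, ‖(Submodule.Quotient.mk ((WithLp.equiv 1 (X × Y)).symm (0, y)) :
        WithLp 1 (X × Y) ⧸ Δ)‖ = ‖y‖) ∧
    (∀ z : Z, (Submodule.Quotient.mk ((WithLp.equiv 1 (X × Y)).symm (i z, 0)) :
        WithLp 1 (X × Y) ⧸ Δ) =
      Submodule.Quotient.mk ((WithLp.equiv 1 (X × Y)).symm (0, j z))) := by
  set R : Submodule ℝ (WithLp 1 (X × Y)) := LinearMap.range
      ((WithLp.linearEquiv 1 ℝ (X × Y)).symm.toLinearMap.comp
        (LinearMap.prod i.toLinearMap (-j.toLinearMap))) with hR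
  have hnorm : ∀ v : WithLp 1 (X × Y),
      ‖v‖ = ‖(WithLp.equiv 1 (X × Y) v).1‖ + ‖(WithLp.equiv 1 (X × Y) v).2‖ := by
    intro v
    have := WithLp.prod_norm_eq_add (p := (1 : ℝ≥0∞)) (by norm_num) v
    simpa using this
  have hmem : ∀ v : WithLp 1 (X × Y), v ∈ R ↔
      ∃ z : Z, (WithLp.equiv 1 (X × Y) v) = (i z, -(j z)) := by
    intro v
    constructor
    · rintro ⟨z, rfl⟩
      exact ⟨z, rfl⟩
    · rintro ⟨z, hz⟩
      refine ⟨z, ?_⟩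
      apply (WithLp.equiv 1 (X × Y)).injective
      simpa using hz.symm
  -- quotient norm as infDist to Δ, then to R
  have key : ∀ v : WithLp 1 (X × Y),
      ‖(Submodule.Quotient.mk v : WithLp 1 (X × Y) ⧸ Δ)‖ = infDist v (R : Set _) := by
    intro v
    have h1 : ‖(Submodule.Quotient.mk v : WithLp 1 (X × Y) ⧸ Δ)‖
        = infDist v (Δ : Set _) := QuotientAddGroup.norm_mk (S := Δ.toAddSubgroup) v
    rw [h1, hΔ]
    rw [Submodule.topologicalClosure_coe, infDist_closure]
  have Rne : (R : Set (WithLp 1 (X × Y))).Nonempty := ⟨0, Submodule.zero_mem R⟩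
  refine ⟨?_, ?_, ?_⟩
  · intro x
    rw [key]
    apply le_antisymm
    · have : ((WithLp.equiv 1 (X × Y)).symm (x, 0)) ∈ Metric.closedBall (0 : WithLp 1 (X × Y)) ‖x‖ ∨ True := Or.inr trivial
      calc infDist ((WithLp.equiv 1 (X × Y)).symm (x, 0)) (R : Set _)
          ≤ dist ((WithLp.equiv 1 (X × Y)).symm (x, 0)) 0 :=
            infDist_le_dist_of_mem (Submodule.zero_mem R)
        _ = ‖x‖ := by rw [dist_zero_right, hnorm]; simp
    · refine le_of_not_gt fun hlt => ?_
      obtain ⟨d, hd, hlt⟩ := (infDist_lt_iff Rne).mp hlt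
      refine absurd ?_ (not_le.mpr hlt)
      obtain ⟨z, hz⟩ := (hmem d).mp hd
      rw [dist_eq_norm, hnorm]
      have h1 : (WithLp.equiv 1 (X × Y) ((WithLp.equiv 1 (X × Y)).symm (x, 0) - d)).1
          = x - i z := by
        have e1 := congrArg Prod.fst hz; have e2 := congrArg Prod.snd hz; simp at e1 e2; simp [e1, e2]
      have h2 : (WithLp.equiv 1 (X × Y) ((WithLp.equiv 1 (X × Y)).symm (x, 0) - d)).2
          = j z := by
        have e1 := congrArg Prod.fst hz; have e2 := congrArg Prod.snd hz; simp at e1 e2; simp [e1, e2]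
      rw [h1, h2, j.norm_map]
      calc ‖x‖ = ‖(x - i z) + i z‖ := by rw [sub_add_cancel]
        _ ≤ ‖x - i z‖ + ‖i z‖ := norm_add_le _ _
        _ = ‖x - i z‖ + ‖z‖ := by rw [i.norm_map]
  · intro y
    rw [key]
    apply le_antisymm
    · calc infDist ((WithLp.equiv 1 (X × Y)).symm (0, y)) (R : Set _)
          ≤ dist ((WithLp.equiv 1 (X × Y)).symm (0, y)) 0 :=
            infDist_le_dist_of_mem (Submodule.zero_mem R)
        _ = ‖y‖ := by rw [dist_zero_right, hnorm]; simp
    · refine le_of_not_gt fun hlt => ?_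
      obtain ⟨d, hd, hlt⟩ := (infDist_lt_iff Rne).mp hlt
      refine absurd ?_ (not_le.mpr hlt)
      obtain ⟨z, hz⟩ := (hmem d).mp hd
      rw [dist_eq_norm, hnorm]
      have h1 : (WithLp.equiv 1 (X × Y) ((WithLp.equiv 1 (X × Y)).symm (0, y) - d)).1
          = -(i z) := by have e1 := congrArg Prod.fst hz; have e2 := congrArg Prod.snd hz; simp at e1 e2; simp [e1, e2]
      have h2 : (WithLp.equiv 1 (X × Y) ((WithLp.equiv 1 (X × Y)).symm (0, y) - d)).2
          = y + j z := by have e1 := congrArg Prod.fst hz; have e2 := congrArg Prod.snd hz; simp at e1 e2; simp [e1, e2]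
      rw [h1, h2, norm_neg, i.norm_map]
      calc ‖y‖ = ‖(y + j z) - j z‖ := by rw [add_sub_cancel_right]
        _ ≤ ‖y + j z‖ + ‖j z‖ := norm_sub_le _ _
        _ = ‖y + j z‖ + ‖z‖ := by rw [j.norm_map]
        _ = ‖z‖ + ‖y + j z‖ := by ring
  · intro z
    rw [Submodule.Quotient.eq]
    rw [hΔ]
    apply Submodule.le_topologicalClosure
    rw [hmem]
    exact ⟨z, by simp⟩
end

section
/- In a normed category (K, K⁰) with the almost amalgamation property, if a sequence u in K has a cofinal subsequence that is a Fraïssé sequence, then u itself is a Fraïssé sequence. -/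
open CategoryTheory

universe u v

/-- A sequence in the subcategory `K`: a functor from `(ℕ, ≤)` to `C` whose bonding
arrows all belong to `K`. -/
structure KSeq (C : Type u) [Category.{v} C] (K : WideSubcat C) where
  obj : ℕ → C
  map : ∀ ⦃n m : ℕ⦄, n ≤ m → (obj n ⟶ obj m)
  map_id : ∀ n : ℕ, map (le_refl n) = 𝟙 (obj n)
  map_comp : ∀ {n m k : ℕ} (h1 : n ≤ m) (h2 : m ≤ k),
    map (h1.trans h2) = map h1 ≫ map h2
  mem : ∀ {n m : ℕ} (h : n ≤ m), K.mem (map h)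

/-- Condition (U): every `K`-object admits arrows of arbitrarily small norm into the
sequence. -/
def CondU {C : Type u} [Category.{v} C] (M : MetricEnrichment C) (K : WideSubcat C)
    (u : KSeq C K) : Prop :=
  ∀ (x : C) (ε : ENNReal), 0 < ε → ∃ (n : ℕ) (f : x ⟶ u.obj n), normOf M K f < ε

/-- Condition (A): given `ε > 0` and a `K`-arrow `f : u_n → y`, there are `m > n` and
`g : y → u_m` with `μ(g) < ε` and `ρ(u_n^m, g ∘ f) < ε`. -/
def CondA {C : Type u} [Category.{v} C] (M : MetricEnrichment C) (K : WideSubcat C)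
    (u : KSeq C K) : Prop :=
  ∀ (ε : ENNReal), 0 < ε → ∀ (n : ℕ) (y : C) (f : u.obj n ⟶ y), K.mem f →
    ∃ (m : ℕ) (hnm : n < m) (g : y ⟶ u.obj m),
      normOf M K g < ε ∧ M.ρ (u.map hnm.le) (f ≫ g) < ε

/-- A Fraïssé sequence: conditions (U) and (A). -/
def IsFraisse {C : Type u} [Category.{v} C] (M : MetricEnrichment C) (K : WideSubcat C)
    (u : KSeq C K) : Prop :=
  CondU M K u ∧ CondA M K u

/-- The cofinal subsequence of `u` along a strictly monotone `φ : ℕ → ℕ`. -/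
def KSeq.subseq {C : Type u} [Category.{v} C] {K : WideSubcat C} (u : KSeq C K)
    (φ : ℕ → ℕ) (hφ : StrictMono φ) : KSeq C K where
  obj n := u.obj (φ n)
  map _ _ h := u.map (hφ.monotone h)
  map_id n := u.map_id (φ n)
  map_comp _ _ := u.map_comp _ _
  mem _ := u.mem _


lemma normOf_comp_le {C : Type u} [Category.{v} C] (M : MetricEnrichment C)
    (K : WideSubcat C) {a b c : C} (k : a ⟶ b) (g : b ⟶ c) (hk : K.mem k) :
    normOf M K (k ≫ g) ≤ normOf M K g := by
  unfold normOf
  refine le_iInf fun d => le_iInf fun i => le_iInf fun j => le_iInf fun hi => le_iInf fun hj => ?_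
  refine iInf_le_of_le d (iInf_le_of_le (k ≫ i) (iInf_le_of_le j
    (iInf_le_of_le (K.comp_mem hk hi) (iInf_le_of_le hj ?_))))
  calc M.ρ ((k ≫ g) ≫ j) (k ≫ i) = M.ρ (k ≫ (g ≫ j)) (k ≫ i) := by rw [Category.assoc]
    _ ≤ M.ρ (g ≫ j) i := M.precomp_nonexpansive _ _ _

/-- In a normed category with the almost amalgamation property, a sequence having a
cofinal Fraïssé subsequence is itself Fraïssé. -/
theorem stmt8 {C : Type u} [Category.{v} C] (M : MetricEnrichment C) (K : WideSubcat C)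
    (amalg : AlmostAmalg M K) (u : KSeq C K) (φ : ℕ → ℕ) (hφ : StrictMono φ)
    (h : IsFraisse M K (u.subseq φ hφ)) : IsFraisse M K u := by
  obtain ⟨hU, hA⟩ := h
  constructor
  · intro x ε hε
    obtain ⟨N, f, hf⟩ := hU x ε hε
    exact ⟨φ N, f, hf⟩
  · intro ε hε n y f hf
    have hε2 : (0 : ENNReal) < ε / 2 := ENNReal.half_pos hε.ne'
    have hnN : n < φ (n + 1) := lt_of_lt_of_le (Nat.lt_succ_self n) hφ.le_apply
    obtain ⟨w, f', g', hf', hg', hρ1⟩ := amalg f (u.map hnN.le) hf (u.mem _) (ε / 2) hε2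
    obtain ⟨M', hNM, g'', hμ, hρ2⟩ := hA (ε / 2) hε2 (n + 1) w g' hg'
    have hmid : φ (n + 1) ≤ φ M' := (hφ hNM).le
    have hbig : n < φ M' := hnN.trans (hφ hNM)
    refine ⟨φ M', hbig, f' ≫ g'', ?_, ?_⟩
    · exact lt_of_le_of_lt (normOf_comp_le M K f' g'' hf')
        (lt_of_lt_of_le hμ ENNReal.half_le_self)
    · have h1 : M.ρ (u.map hbig.le) (u.map hnN.le ≫ (g' ≫ g'')) < ε / 2 := by
        have : u.map hbig.le = u.map hnN.le ≫ u.map hmid := u.map_comp _ _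
        rw [this]
        refine lt_of_le_of_lt (M.precomp_nonexpansive _ _ _) ?_
        exact hρ2
      have h2 : M.ρ (u.map hnN.le ≫ (g' ≫ g'')) (f ≫ (f' ≫ g'')) < ε / 2 := by
        have e1 : u.map hnN.le ≫ (g' ≫ g'') = (u.map hnN.le ≫ g') ≫ g'' := by
          rw [Category.assoc]
        have e2 : f ≫ (f' ≫ g'') = (f ≫ f') ≫ g'' := by rw [Category.assoc]
        rw [e1, e2]
        refine lt_of_le_of_lt (M.postcomp_nonexpansive _ _ _) ?_
        rw [M.ρ_comm]
        exact hρ1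
      calc M.ρ (u.map hbig.le) (f ≫ (f' ≫ g''))
          ≤ M.ρ (u.map hbig.le) (u.map hnN.le ≫ (g' ≫ g''))
            + M.ρ (u.map hnN.le ≫ (g' ≫ g'')) (f ≫ (f' ≫ g'')) := M.ρ_triangle _ _ _
        _ < ε / 2 + ε / 2 := ENNReal.add_lt_add h1 h2
        _ = ε := ENNReal.add_halves ε
end

section
/- Let f : X → Y be a continuous map of compact metric spaces which is 1-Lipschitz. Then the norm of f in the (opposite) normed category of compact metric spaces—i.e. the infimum of ρ(p, f∘q) over all 1-Lipschitz surjections p : Z → Y, q : Z → X from a common compact metric space Z—equals inf{ ε > 0 : f(X) is ε-dense in Y }. -/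
open Function

/-- For a 1-Lipschitz map `f : X → Y` of nonempty compact metric spaces, the norm of `f`
in the opposite normed category of compact metric spaces — the infimum of
`ρ(p, f ∘ q) = sup_z d(p z, f (q z))` over all 1-Lipschitz surjections `p : Z → Y`,
`q : Z → X` from a common nonempty compact metric space — equals
`inf{ε > 0 : f(X) is ε-dense in Y}`. -/
theorem stmt10 {X Y : Type} [MetricSpace X] [CompactSpace X] [Nonempty X]
    [MetricSpace Y] [CompactSpace Y] [Nonempty Y]
    (f : X → Y) (hf : LipschitzWith 1 f) :
    sInf {r : ℝ | ∃ (Z : Type) (_ : MetricSpace Z) (_ : CompactSpace Z) (_ : Nonempty Z)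
        (p : Z → Y) (q : Z → X), LipschitzWith 1 p ∧ LipschitzWith 1 q ∧
        Surjective p ∧ Surjective q ∧ r = ⨆ z : Z, dist (p z) (f (q z))}
      = sInf {ε : ℝ | 0 < ε ∧ ∀ y : Y, ∃ x : X, dist y (f x) ≤ ε} := by
  classical
  -- bound on distances in Y
  obtain ⟨C, hC⟩ : ∃ C : ℝ, ∀ a b : Y, dist a b ≤ C := by
    obtain ⟨C, hC⟩ := Metric.isBounded_iff.mp (isCompact_univ (X := Y)).isBounded
    exact ⟨C, fun a b => hC trivial trivial⟩
  set g : Y → ℝ := fun y => ⨅ x, dist y (f x) with hg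
  have hgnn : ∀ y, 0 ≤ g y := fun y => Real.iInf_nonneg fun x => dist_nonneg
  have hgle : ∀ y, g y ≤ C := fun y =>
    (ciInf_le ⟨0, fun r ⟨x, hx⟩ => hx ▸ dist_nonneg⟩ (Classical.arbitrary X)).trans
      (hC _ _)
  have hbddg : BddAbove (Set.range g) := ⟨C, fun r ⟨y, hy⟩ => hy ▸ hgle y⟩
  set c : ℝ := ⨆ y, g y with hc
  have hcnn : 0 ≤ c :=
    (hgnn (Classical.arbitrary Y)).trans (le_ciSup hbddg (Classical.arbitrary Y))
  have hgc : ∀ y, g y ≤ c := fun y => le_ciSup hbddg y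
  -- the infimum defining g is attained
  have hmin : ∀ y : Y, ∃ x : X, dist y (f x) ≤ g y := by
    intro y
    obtain ⟨x, -, hx⟩ := (isCompact_univ (X := X)).exists_isMinOn Set.univ_nonempty
      ((continuous_const.dist (hf.continuous)).continuousOn (s := Set.univ))
    exact ⟨x, le_ciInf fun x' => hx (Set.mem_univ x')⟩
  -- RHS = c
  have hRHS : sInf {ε : ℝ | 0 < ε ∧ ∀ y : Y, ∃ x : X, dist y (f x) ≤ ε} = c := by
    have hmem : ∀ ε : ℝ, 0 < ε → c ≤ ε →
        ε ∈ {ε : ℝ | 0 < ε ∧ ∀ y : Y, ∃ x : X, dist y (f x) ≤ ε} := by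
      intro ε hε hcε
      exact ⟨hε, fun y => (hmin y).imp fun x hx => hx.trans ((hgc y).trans hcε)⟩
    have hlb : ∀ ε ∈ {ε : ℝ | 0 < ε ∧ ∀ y : Y, ∃ x : X, dist y (f x) ≤ ε}, c ≤ ε := by
      rintro ε ⟨-, hε⟩
      refine ciSup_le fun y => ?_
      obtain ⟨x, hx⟩ := hε y
      exact (ciInf_le ⟨0, fun r ⟨x', hx'⟩ => hx' ▸ dist_nonneg⟩ x).trans hx
    refine le_antisymm ?_ (le_csInf ⟨c + 1, hmem _ (by linarith) (by linarith)⟩ hlb)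
    refine le_of_forall_pos_le_add fun δ hδ => ?_
    exact csInf_le ⟨c, hlb⟩ (hmem (c + δ) (by linarith) (by linarith))
  rw [hRHS]
  -- LHS = c
  set A := {r : ℝ | ∃ (Z : Type) (_ : MetricSpace Z) (_ : CompactSpace Z) (_ : Nonempty Z)
      (p : Z → Y) (q : Z → X), LipschitzWith 1 p ∧ LipschitzWith 1 q ∧
      Surjective p ∧ Surjective q ∧ r = ⨆ z : Z, dist (p z) (f (q z))} with hA
  -- lower bound
  have hlbA : ∀ r ∈ A, c ≤ r := by
    rintro r ⟨Z, _, _, _, p, q, hp, hq, hps, hqs, rfl⟩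
    refine ciSup_le fun y => ?_
    obtain ⟨z, rfl⟩ := hps y
    refine (ciInf_le ⟨0, fun s ⟨x', hx'⟩ => hx' ▸ dist_nonneg⟩ (q z)).trans
      (le_ciSup (f := fun z' => dist (p z') (f (q z'))) ⟨C, ?_⟩ z)
    rintro s ⟨z', rfl⟩; exact hC _ _
  -- membership of a witness with value ≤ c
  have hSclosed : IsClosed {w : X × Y | dist w.2 (f w.1) ≤ c} :=
    isClosed_le (continuous_snd.dist (hf.continuous.comp continuous_fst)) continuous_const
  let Z : Type := {w : X × Y // dist w.2 (f w.1) ≤ c}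
  haveI : CompactSpace Z := isCompact_iff_compactSpace.mp
    (hSclosed.isCompact)
  haveI : Nonempty Z := ⟨⟨(Classical.arbitrary X, f (Classical.arbitrary X)),
    by simpa using hcnn⟩⟩
  let p : Z → Y := fun z => z.1.2
  let q : Z → X := fun z => z.1.1
  have hp : LipschitzWith 1 p := by
    refine LipschitzWith.of_dist_le_mul fun z z' => ?_
    rw [NNReal.coe_one, one_mul, Subtype.dist_eq, Prod.dist_eq]
    exact le_max_right _ _
  have hq : LipschitzWith 1 q := by
    refine LipschitzWith.of_dist_le_mul fun z z' => ?_
    rw [NNReal.coe_one, one_mul, Subtype.dist_eq, Prod.dist_eq]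
    exact le_max_left _ _
  have hps : Surjective p := by
    intro y
    obtain ⟨x, hx⟩ := hmin y
    exact ⟨⟨(x, y), hx.trans (hgc y)⟩, rfl⟩
  have hqs : Surjective q := fun x => ⟨⟨(x, f x), by simpa using hcnn⟩, rfl⟩
  have hmemA : (⨆ z : Z, dist (p z) (f (q z))) ∈ A :=
    ⟨Z, inferInstance, inferInstance, inferInstance, p, q, hp, hq, hps, hqs, rfl⟩
  have hle : (⨆ z : Z, dist (p z) (f (q z))) ≤ c := ciSup_le fun z => z.2
  exact le_antisymm ((csInf_le ⟨c, hlbA⟩ hmemA).trans hle) (le_csInf ⟨_, hmemA⟩ hlbA)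
end

section
/- For every finite metric space X and every ε > 0 there exist a finite metric space Y with all distances rational and a bijection h : Y → X that is 1-Lipschitz and whose inverse has Lipschitz constant < 1 + ε. -/
theorem stmt13_aux (X : Type) [iX : MetricSpace X] [Fintype X] (ε : ℝ)
    (m2 : MetricSpace X) (L : NNReal) (hL : (L : ℝ) < 1 + ε)
    (hrat : ∀ a b : X, ∃ q : ℚ, @dist X m2.toPseudoMetricSpace.toDist a b = (q : ℝ))
    (h1 : ∀ a b : X, @dist X iX.toPseudoMetricSpace.toDist a b
      ≤ @dist X m2.toPseudoMetricSpace.toDist a b)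
    (h2 : ∀ a b : X, @dist X m2.toPseudoMetricSpace.toDist a b
      ≤ (L : ℝ) * @dist X iX.toPseudoMetricSpace.toDist a b) :
    ∃ (Y : Type) (mY : MetricSpace Y) (_ : Fintype Y) (h : Y ≃ X),
      (∀ a b : Y, ∃ q : ℚ, @dist Y mY.toPseudoMetricSpace.toDist a b = (q : ℝ)) ∧
      @LipschitzWith Y X mY.toPseudoMetricSpace.toPseudoEMetricSpace
        iX.toPseudoMetricSpace.toPseudoEMetricSpace 1 h ∧
      ∃ L' : NNReal, (L' : ℝ) < 1 + ε ∧
        @LipschitzWith X Y iX.toPseudoMetricSpace.toPseudoEMetricSpace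
          mY.toPseudoMetricSpace.toPseudoEMetricSpace L' h.symm := by
  refine ⟨X, m2, inferInstance, Equiv.refl X, hrat, ?_, L, hL, ?_⟩
  · exact @LipschitzWith.of_dist_le_mul X X m2.toPseudoMetricSpace iX.toPseudoMetricSpace 1 _
      (fun x y => by simpa using h1 x y)
  · exact @LipschitzWith.of_dist_le_mul X X iX.toPseudoMetricSpace m2.toPseudoMetricSpace L _
      (fun x y => by simpa using h2 x y)

/-- For every finite metric space `X` and `ε > 0` there exist a finite metric space `Y`
with all distances rational and a bijection `h : Y → X` that is 1-Lipschitz and whose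
inverse has Lipschitz constant `< 1 + ε`. -/
theorem stmt13 (X : Type) [MetricSpace X] [Fintype X] (ε : ℝ) (hε : 0 < ε) :
    ∃ (Y : Type) (_ : MetricSpace Y) (_ : Fintype Y) (h : Y ≃ X),
      (∀ a b : Y, ∃ q : ℚ, dist a b = (q : ℝ)) ∧
      LipschitzWith 1 h ∧
      ∃ L : NNReal, (L : ℝ) < 1 + ε ∧ LipschitzWith L h.symm := by
  by_cases hs : ∀ a b : X, a = b
  · refine ⟨X, inferInstance, inferInstance, Equiv.refl X, ?_, ?_, 1, by simp; linarith, ?_⟩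
    · intro a b; exact ⟨0, by rw [hs a b]; simp⟩
    · simpa using LipschitzWith.id
    · simpa using LipschitzWith.id
  · push_neg at hs
    obtain ⟨a₀, b₀, hab⟩ := hs
    classical
    -- minimal positive distance
    set S : Finset ℝ := (Finset.univ.filter fun p : X × X => p.1 ≠ p.2).image
      (fun p => dist p.1 p.2) with hS
    have hSne : S.Nonempty := ⟨dist a₀ b₀, Finset.mem_image.2
      ⟨(a₀, b₀), Finset.mem_filter.2 ⟨Finset.mem_univ _, hab⟩, rfl⟩⟩
    set δ : ℝ := S.min' hSne with hδdef
    have hδpos : 0 < δ := by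
      have hmem : δ ∈ S := S.min'_mem hSne
      rw [hS] at hmem
      simp only [Finset.mem_image, Finset.mem_filter] at hmem
      obtain ⟨p, ⟨-, hne⟩, hpe⟩ := hmem
      rw [← hpe]
      exact dist_pos.2 hne
    have hδle : ∀ a b : X, a ≠ b → δ ≤ dist a b := by
      intro a b hne
      exact S.min'_le _ (Finset.mem_image.2
        ⟨(a, b), Finset.mem_filter.2 ⟨Finset.mem_univ _, hne⟩, rfl⟩)
    set η : ℝ := ε * δ / 4 with hηdef
    have hηpos : 0 < η := by positivity
    -- choose rationals
    have hex : ∀ a b : X, ∃ r : ℚ, dist a b + η < (r : ℝ) ∧ (r : ℝ) < dist a b + 2 * η := by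
      intro a b
      exact exists_rat_btwn (by linarith)
    choose q0 hq01 hq02 using hex
    set q : X → X → ℚ := fun a b => max (q0 a b) (q0 b a) with hqdef
    have hqsymm : ∀ a b, q a b = q b a := fun a b => max_comm _ _
    have hqlb : ∀ a b, dist a b + η < (q a b : ℝ) := by
      intro a b
      calc dist a b + η < (q0 a b : ℝ) := hq01 a b
        _ ≤ (q a b : ℝ) := by exact_mod_cast le_max_left _ _
    have hqub : ∀ a b, (q a b : ℝ) < dist a b + 2 * η := by
      intro a b
      have h1 := hq02 a b
      have h2 := hq02 b a
      rw [dist_comm b a] at h2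
      rw [hqdef]
      push_cast
      exact max_lt h1 h2
    -- new distance
    set d' : X → X → ℝ := fun a b => if a = b then 0 else (q a b : ℝ) with hd'def
    have hd'pos : ∀ a b, a ≠ b → 0 < d' a b := by
      intro a b hne
      rw [hd'def]; simp only [if_neg hne]
      have h1 := hqlb a b
      have h2 := dist_nonneg (x := a) (y := b)
      linarith
    have hd'self : ∀ a, d' a a = 0 := fun a => by rw [hd'def]; simp
    have hd'comm : ∀ a b, d' a b = d' b a := by
      intro a b
      rw [hd'def]
      simp only [hqsymm a b, eq_comm]
    have hd'tri : ∀ a b c : X, d' a c ≤ d' a b + d' b c := by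
      intro a b c
      rcases eq_or_ne a c with rfl | hac
      · rw [hd'self]
        rcases eq_or_ne a b with rfl | hab'
        · simp [hd'self]
        · have h1 := hd'pos a b hab'
          have h2 := hd'pos b a (Ne.symm hab')
          linarith
      rcases eq_or_ne a b with rfl | hab'
      · rw [hd'self]; linarith
      rcases eq_or_ne b c with rfl | hbc
      · simp [hd'self]
      rw [hd'def]
      simp only [if_neg hac, if_neg hab', if_neg hbc]
      have h1 := hqub a c
      have h2 := hqlb a b
      have h3 := hqlb b c
      have h4 := dist_triangle a b c
      linarith
    refine stmt13_aux X ε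
      { dist := d', dist_self := hd'self, dist_comm := hd'comm,
        dist_triangle := hd'tri,
        eq_of_dist_eq_zero := fun {a b} hz => by
          by_contra hne
          exact absurd hz (ne_of_gt (hd'pos a b hne)) }
      ⟨1 + ε / 2, by positivity⟩ ?_ ?_ ?_ ?_
    · show ((1 + ε / 2 : ℝ)) < 1 + ε
      linarith
    · intro a b
      show ∃ r : ℚ, d' a b = (r : ℝ)
      rcases eq_or_ne a b with rfl | hne
      · exact ⟨0, by rw [hd'self]; simp⟩
      · exact ⟨q a b, by rw [hd'def]; simp [if_neg hne]⟩
    · intro a b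
      show dist a b ≤ d' a b
      rcases eq_or_ne a b with rfl | hne
      · rw [hd'self]; simp
      · have h1 := hqlb a b
        rw [hd'def]
        simp only [if_neg hne]
        linarith
    · intro x y
      show d' x y ≤ (1 + ε / 2) * dist x y
      rcases eq_or_ne x y with rfl | hne
      · rw [hd'self]
        have : (0:ℝ) ≤ (1 + ε / 2) * dist x x := by positivity
        linarith
      · have h1 := hqub x y
        have h2 := hδle x y hne
        rw [hd'def]
        simp only [if_neg hne]
        have hd : 0 < dist x y := dist_pos.2 hne
        have h3 : (2 : ℝ) * η ≤ (ε / 2) * dist x y := by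
          rw [hηdef]
          nlinarith
        nlinarith
end

section
/- Let K be a compact Hausdorff space satisfying: for every surjection f : T → S of nonempty finite (discrete) sets and every continuous surjection p : K → S, there exists a continuous surjection q : K → T with f ∘ q = p. Then K has no isolated points. -/
/-- Let `K` be a nonempty compact Hausdorff space such that every continuous surjection
`p : K → S` onto a nonempty finite discrete set lifts along every surjection `f : T → S`
of nonempty finite discrete sets (i.e. there is a continuous surjection `q : K → T` with
`f ∘ q = p`).  Then `K` has no isolated points. -/
theorem stmt17 (K : Type*) [TopologicalSpace K] [CompactSpace K] [T2Space K] [Nonempty K]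
    (H : ∀ (S T : Type) [Fintype S] [Fintype T] [Nonempty S] [Nonempty T] (f : T → S),
      Function.Surjective f →
      ∀ p : K → S, @Continuous K S _ ⊥ p → Function.Surjective p →
        ∃ q : K → T, @Continuous K T _ ⊥ q ∧ Function.Surjective q ∧ f ∘ q = p) :
    ∀ x : K, ¬ IsOpen ({x} : Set K) := by
  classical
  intro x hx
  by_cases hK : ∀ y : K, y = x
  · -- K is a singleton; lift the constant map along Bool → Unit to get a contradiction
    obtain ⟨q, -, hqsurj, -⟩ := H Unit Bool (fun _ => ()) (fun _ => ⟨true, rfl⟩)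
      (fun _ => ()) (@continuous_const K Unit _ ⊥ ()) (fun _ => ⟨x, rfl⟩)
    obtain ⟨a, ha⟩ := hqsurj true
    obtain ⟨b, hb⟩ := hqsurj false
    have : a = b := (hK a).trans (hK b).symm
    simp [this, hb] at ha
  · push_neg at hK
    obtain ⟨y, hy⟩ := hK
    -- p : K → Bool is the indicator of {x}
    let p : K → Bool := fun z => decide (z = x)
    have hpcont : @Continuous K Bool _ ⊥ p := by
      letI : TopologicalSpace Bool := ⊥
      haveI : DiscreteTopology Bool := ⟨rfl⟩
      rw [continuous_discrete_rng]
      intro b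
      cases b with
      | true =>
          have : p ⁻¹' {true} = {x} := by
            ext z; simp [p]
          rw [this]; exact hx
      | false =>
          have : p ⁻¹' {false} = {x}ᶜ := by
            ext z; simp [p]
          rw [this]
          exact (isClosed_singleton).isOpen_compl
    have hpsurj : Function.Surjective p := by
      intro b
      cases b with
      | true => exact ⟨x, by simp [p]⟩
      | false => exact ⟨y, by simp [p, hy]⟩
    -- lift along f : Fin 3 → Bool with f 0 = f 1 = true, f 2 = false
    let f : Fin 3 → Bool := fun i => decide (i ≠ 2)
    have hfsurj : Function.Surjective f := by
      intro b
      cases b with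
      | true => exact ⟨0, by decide⟩
      | false => exact ⟨2, by decide⟩
    obtain ⟨q, -, hqsurj, hcomp⟩ := H Bool (Fin 3) f hfsurj p hpcont hpsurj
    obtain ⟨a, ha⟩ := hqsurj 0
    obtain ⟨b, hb⟩ := hqsurj 1
    have hpa : p a = true := by
      have := congrFun hcomp a
      simp [Function.comp, ha, f] at this
      simp [this]
    have hpb : p b = true := by
      have := congrFun hcomp b
      simp [Function.comp, hb, f] at this
      simp [this]
    have hax : a = x := by simpa [p] using hpa
    have hbx : b = x := by simpa [p] using hpb
    have : q a = q b := by rw [hax, hbx]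
    rw [ha, hb] at this
    exact absurd this (by decide)
end

section
/- Let C = 2^ℕ × [0,1] (the Cantor set times the unit interval) and p : C → 2^ℕ the projection. Then for every continuous surjection f : C → S onto a finite discrete set S there exists a unique map g : 2^ℕ → S with f = g ∘ p; consequently C satisfies the lifting property (C) for finite quotients (for every finite surjection f : T → S and quotient p : C → S there is a quotient q : C → T with f∘q = p), yet C is not homeomorphic to the Cantor set. -/
open Set

lemma cyl_open (N : ℕ) (x : ℕ → Bool) : IsOpen {y : ℕ → Bool | ∀ i < N, y i = x i} := by
  have h : {y : ℕ → Bool | ∀ i < N, y i = x i} =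
      ⋂ i ∈ Finset.range N, {y : ℕ → Bool | y i = x i} := by
    ext y; simp [Finset.mem_range]
  rw [h]
  refine isOpen_biInter_finset fun i _ => ?_
  have : {y : ℕ → Bool | y i = x i} = (fun y : ℕ → Bool => y i) ⁻¹' {x i} := rfl
  rw [this]
  exact (isOpen_discrete _).preimage (continuous_apply i)

lemma cantor_uniform {S : Type*} [TopologicalSpace S] [DiscreteTopology S]
    (g : (ℕ → Bool) → S) (hg : Continuous g) :
    ∃ N, ∀ x y : ℕ → Bool, (∀ i < N, x i = y i) → g x = g y := by
  have key : ∀ x : ℕ → Bool, ∃ N, ∀ y, (∀ i < N, y i = x i) → g y = g x := by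
    intro x
    have hop : IsOpen (g ⁻¹' {g x}) := (isOpen_discrete _).preimage hg
    rw [isOpen_pi_iff] at hop
    obtain ⟨I, u, hu, hsub⟩ := hop x rfl
    refine ⟨(I.sup id) + 1, fun y hy => hsub fun a ha => ?_⟩
    have hlt : a < I.sup id + 1 := Nat.lt_succ_of_le (Finset.le_sup (f := id) ha)
    rw [hy a hlt]; exact (hu a ha).2
  choose Nf hNf using key
  obtain ⟨F, hF⟩ := isCompact_univ.elim_finite_subcover
    (fun x : ℕ → Bool => {y | ∀ i < Nf x, y i = x i}) (fun x => cyl_open _ _)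
    (fun y _ => Set.mem_iUnion.2 ⟨y, fun i _ => rfl⟩)
  refine ⟨F.sup Nf, fun x y hxy => ?_⟩
  obtain ⟨z, hz, hxz⟩ := Set.mem_iUnion₂.1 (hF (Set.mem_univ x))
  have h1 : g x = g z := hNf z x hxz
  have h2 : g y = g z := hNf z y fun i hi2 => by
    rw [← hxy i (lt_of_lt_of_le hi2 (Finset.le_sup hz))]; exact hxz i hi2
  rw [h1, h2]

lemma cantor_cont_of_dep {T : Type*} [TopologicalSpace T] [DiscreteTopology T]
    (h : (ℕ → Bool) → T) (N : ℕ)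
    (hd : ∀ x y : ℕ → Bool, (∀ i < N, x i = y i) → h x = h y) : Continuous h := by
  rw [continuous_discrete_rng]
  intro b
  rw [isOpen_iff_mem_nhds]
  intro x hx
  refine Filter.mem_of_superset ((cyl_open N x).mem_nhds (fun i _ => rfl)) fun y hy => ?_
  show h y ∈ ({b} : Set T)
  have : h y = h x := hd y x hy
  rw [this]; exact hx

/-- Let `C = 2^ℕ × [0,1]` and `p : C → 2^ℕ` the projection.  Every continuous surjection
`f : C → S` onto a finite discrete set factors uniquely through `p`; consequently `C`
satisfies the lifting property (C) for finite quotients, yet `C` is not homeomorphic to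
the Cantor set. -/
theorem stmt18 :
    (∀ (S : Type) [Fintype S] [Nonempty S] (f : (ℕ → Bool) × unitInterval → S),
      @Continuous _ S _ ⊥ f → Function.Surjective f →
        ∃! g : (ℕ → Bool) → S, f = g ∘ Prod.fst) ∧
    (∀ (S T : Type) [Fintype S] [Fintype T] [Nonempty S] [Nonempty T] (f : T → S),
      Function.Surjective f →
      ∀ p : (ℕ → Bool) × unitInterval → S, @Continuous _ S _ ⊥ p → Function.Surjective p →
        ∃ q : (ℕ → Bool) × unitInterval → T,
          @Continuous _ T _ ⊥ q ∧ Function.Surjective q ∧ f ∘ q = p) ∧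
    ¬ Nonempty ((ℕ → Bool) × unitInterval ≃ₜ (ℕ → Bool)) := by
  refine ⟨?_, ?_, ?_⟩
  · -- Part 1
    intro S _ _ f hf hsurj
    letI : TopologicalSpace S := ⊥
    haveI : DiscreteTopology S := ⟨rfl⟩
    have hconst : ∀ (x : ℕ → Bool) (u : unitInterval), f (x, u) = f (x, 0) := by
      intro x u
      exact PreconnectedSpace.constant inferInstance (hf.comp (Continuous.prodMk_right x))
    refine ⟨fun x => f (x, 0), ?_, ?_⟩
    · funext z
      exact (hconst z.1 z.2).symm ▸ (congrArg f (Prod.mk.eta).symm)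
    · intro g' hg'
      funext x
      exact (congrFun hg' (x, 0)).symm
  · -- Part 2
    intro S T _ _ _ _ f hfsurj p hp hpsurj
    letI : TopologicalSpace S := ⊥
    haveI : DiscreteTopology S := ⟨rfl⟩
    letI : TopologicalSpace T := ⊥
    haveI : DiscreteTopology T := ⟨rfl⟩
    have hconst : ∀ (x : ℕ → Bool) (u : unitInterval), p (x, u) = p (x, 0) := by
      intro x u
      exact PreconnectedSpace.constant inferInstance (hp.comp (Continuous.prodMk_right x))
    set g : (ℕ → Bool) → S := fun x => p (x, 0) with hg
    have hgc : Continuous g := hp.comp (continuous_id.prodMk continuous_const)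
    have hgsurj : Function.Surjective g := by
      intro s
      obtain ⟨⟨x, u⟩, hx⟩ := hpsurj s
      refine ⟨x, ?_⟩
      show p (x, 0) = s
      rw [← hconst x u]; exact hx
    obtain ⟨N, hN⟩ := cantor_uniform g hgc
    set m := Fintype.card T with hmdef
    have hm : 0 < m := Fintype.card_pos
    have hσ : ∀ s : S, ∃ σ : Fin m → T,
        (∀ i, f (σ i) = s) ∧ ∀ t, f t = s → ∃ i, σ i = t := by
      intro s
      classical
      haveI : Nonempty {t // f t = s} := (hfsurj s).elim fun t ht => ⟨⟨t, ht⟩⟩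
      set k := Fintype.card {t // f t = s} with hkdef
      have hk : 0 < k := Fintype.card_pos
      have hkm : k ≤ m := Fintype.card_subtype_le _
      set e := Fintype.equivFin {t // f t = s} with he
      refine ⟨fun i => (e.symm ⟨(i : ℕ) % k, Nat.mod_lt _ hk⟩).1,
        fun i => (e.symm _).2, fun t ht => ?_⟩
      refine ⟨⟨(e ⟨t, ht⟩ : Fin k), lt_of_lt_of_le (e ⟨t, ht⟩).2 hkm⟩, ?_⟩
      have hfin : (⟨((e ⟨t, ht⟩ : Fin k) : ℕ) % k, Nat.mod_lt _ hk⟩ : Fin k) = e ⟨t, ht⟩ :=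
        Fin.ext (Nat.mod_eq_of_lt (e ⟨t, ht⟩).2)
      simp only [hfin, Equiv.symm_apply_apply]
    choose σ hσ1 hσ2 using hσ
    set cnt : (ℕ → Bool) → ℕ :=
      fun x => ∑ i ∈ Finset.range m, if x (N + i) = true then 1 else 0 with hcntdef
    set j : (ℕ → Bool) → Fin m := fun x => ⟨min (cnt x) (m - 1), by omega⟩ with hjdef
    set h : (ℕ → Bool) → T := fun x => σ (g x) (j x) with hhdef
    have hdep : ∀ x y : ℕ → Bool, (∀ i < N + m, x i = y i) → h x = h y := by
      intro x y hxy
      have hgxy : g x = g y := hN x y fun i hi => hxy i (by omega)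
      have hcxy : cnt x = cnt y := by
        refine Finset.sum_congr rfl fun i hi => ?_
        rw [hxy (N + i) (by simp only [Finset.mem_range] at hi; omega)]
      rw [hhdef]
      simp only [hjdef, hcxy, hgxy]
    refine ⟨fun z => h z.1, (cantor_cont_of_dep h (N + m) hdep).comp continuous_fst, ?_, ?_⟩
    · -- surjectivity
      intro t
      obtain ⟨x0, hx0⟩ := hgsurj (f t)
      obtain ⟨i, hi⟩ := hσ2 (f t) t rfl
      set x : ℕ → Bool := fun n => if n < N then x0 n else decide (n < N + (i : ℕ)) with hxdef
      have hgx : g x = f t := by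
        rw [hN x x0 fun i' hi' => by simp [hxdef, hi']]
        exact hx0
      have hcnt : cnt x = (i : ℕ) := by
        have h1 : ∀ i' ∈ Finset.range m,
            (if x (N + i') = true then 1 else 0) = if i' < (i : ℕ) then 1 else 0 := by
          intro i' _
          have : x (N + i') = decide (i' < (i : ℕ)) := by
            simp only [hxdef]
            rw [if_neg (by omega)]
            congr 1
            simp only [eq_iff_iff]
            omega
          rw [this]
          by_cases hlt : i' < (i : ℕ) <;> simp [hlt]
        rw [hcntdef]
        simp only []
        rw [Finset.sum_congr rfl h1]
        have key : ∀ M : ℕ, (i : ℕ) ≤ M →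
            (∑ i' ∈ Finset.range M, if i' < (i : ℕ) then 1 else 0) = (i : ℕ) := by
          intro M
          induction M with
          | zero => intro hM; simpa using (Nat.le_zero.1 hM).symm
          | succ M ih =>
            intro hM
            rw [Finset.sum_range_succ]
            rcases Nat.lt_or_ge M (i : ℕ) with hc | hc
            · have hiM : (i : ℕ) = M + 1 := by omega
              rw [if_pos hc]
              have : (∑ i' ∈ Finset.range M, if i' < (i : ℕ) then 1 else 0)
                  = ∑ i' ∈ Finset.range M, 1 := by
                refine Finset.sum_congr rfl fun i' hi' => ?_
                simp only [Finset.mem_range] at hi'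
                rw [if_pos (by omega)]
              rw [this, Finset.sum_const, Finset.card_range]
              simp only [smul_eq_mul, mul_one]
              omega
            · rw [if_neg (by omega), ih hc]; omega
        exact key m (le_of_lt i.isLt)
      have hjx : j x = i := by
        rw [hjdef]
        apply Fin.ext
        simp only [hcnt]
        have := i.isLt
        omega
      refine ⟨(x, 0), ?_⟩
      show h x = t
      rw [hhdef]
      simp only [hgx, hjx, hi]
    · -- f ∘ q = p
      funext z
      show f (h z.1) = p z
      rw [hhdef]
      simp only [hσ1]
      rw [hg]
      exact (hconst z.1 z.2).symm.trans (congrArg p Prod.mk.eta)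
  · -- Part 3
    rintro ⟨e⟩
    have hc : Continuous (fun u : unitInterval => e ((fun _ => false, u))) :=
      e.continuous.comp (Continuous.prodMk_right _)
    have h2 := (isPreconnected_range hc).subsingleton
      (Set.mem_range_self (0 : unitInterval)) (Set.mem_range_self (1 : unitInterval))
    have h3 := e.injective h2
    have h4 : (0 : unitInterval) = 1 := (Prod.mk.injEq _ _ _ _ ▸ h3).2
    have h5 := congrArg Subtype.val h4
    norm_num at h5
end
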